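/- (Theorem 2, all-symbol locality construction) Let q be a prime power, F_q the field with q elements, and F an extension of F_q of degree m. Let n_L, α, t, K be positive integers, let a_1 ≥ … ≥ a_{n_L} ≥ 0 be integers with K_L := P(n_L) ≥ 1, and assume K ≤ t·K_L and m ≥ t·K_L. Let B be a K_L × (n_L·α) URA matrix over F_q with profile (a_1,…,a_{n_L}), let G_BASIC be the block-diagonal matrix with t diagonal copies of B (so G_BASIC has n := t·n_L thick columns of width α), and let θ_1,…,θ_{tK_L} ∈ F be linearly independent over F_q. Let C ⊆ F^{nα} consist of all vectors (f(θ_1),…,f(θ_{tK_L}))·G_BASIC, where f ranges over linearized polynomials of q-degree at most K−1 over F. Then the map f ↦ (f(θ_1),…,f(θ_{tK_L}))·G_BASIC is injective, and the minimum thick Hamming distance of C, viewed as a length-n code over the alphabet F^α, is exactly d_min = n − P^{inv}(K) + 1; in particular the construction attains the bound d_min ≤ n − P^{inv}(K) + 1 with equality. -/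

import Mathlib

/-- Partial sums `P(s) = a_1 + … + a_s` of a (0-indexed) sequence `a : ℕ → ℕ`. -/
def Pfun (a : ℕ → ℕ) (s : ℕ) : ℕ := ∑ i ∈ Finset.range s, a i

/-- `Pinv ν` is the smallest integer `s` with `P(s) ≥ ν`. -/
noncomputable def Pinv (a : ℕ → ℕ) (ν : ℕ) : ℕ := sInf {s : ℕ | ν ≤ Pfun a s}

/-- The rank of the submatrix of `G` formed by the thick columns indexed by `S`. -/
noncomputable def thickRank {K : Type*} [Field K] {R C : Type*} [Fintype C] [DecidableEq C]
    {α : ℕ} (G : Matrix R (C × Fin α) K) (S : Finset C) : ℕ :=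
  (G.submatrix id (fun p : {p : C × Fin α // p.1 ∈ S} => (p : C × Fin α))).rank

/- The thick Hamming distance between two words over the alphabet `F^α`, the thick
positions being indexed by `C`. -/
open scoped Classical in
noncomputable def thickDist {F C : Type*} [Fintype C] {α : ℕ}
    (v w : C × Fin α → F) : ℕ :=
  (Finset.univ.filter fun j : C => ∃ a, v (j, a) ≠ w (j, a)).card

section ArithAux


lemma Pfun_mono (a : ℕ → ℕ) : Monotone (Pfun a) := fun _ _ h =>
  Finset.sum_le_sum_of_subset (Finset.range_subset_range.2 h)

lemma Pfun_add (a : ℕ → ℕ) (s z : ℕ) :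
    Pfun a (s + z) = Pfun a s + ∑ i ∈ Finset.range z, a (s + i) := by
  unfold Pfun; rw [Finset.sum_range_add]

lemma Pfun_shift {a : ℕ → ℕ} {nL : ℕ} (hper : ∀ i, a (i + nL) = a i) (s : ℕ) :
    Pfun a (nL + s) = Pfun a nL + Pfun a s := by
  rw [Pfun_add]
  congr 1
  refine Finset.sum_congr rfl fun i _ => ?_
  rw [add_comm nL i, hper i]

lemma Pfun_mul_add {a : ℕ → ℕ} {nL : ℕ} (hper : ∀ i, a (i + nL) = a i) (j s : ℕ) :
    Pfun a (j * nL + s) = j * Pfun a nL + Pfun a s := by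
  induction j with
  | zero => simp
  | succ j ih =>
      have : (j+1) * nL + s = nL + (j * nL + s) := by ring
      rw [this, Pfun_shift hper, ih]; ring

lemma Pfun_subadd_small {a : ℕ → ℕ} {nL : ℕ} (hper : ∀ i, a (i + nL) = a i)
    (hmono : ∀ i j, i ≤ j → j < nL → a j ≤ a i) {z1 z2 : ℕ}
    (h1 : z1 ≤ nL) (h2 : z2 ≤ nL) :
    Pfun a (z1 + z2) ≤ Pfun a z1 + Pfun a z2 := by
  rcases le_or_gt (z1 + z2) nL with h | h
  · rw [Pfun_add]
    gcongr
    refine Finset.sum_le_sum fun i hi => ?_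
    exact hmono i (z1 + i) (Nat.le_add_left _ _)
      (by have := Finset.mem_range.1 hi; omega)
  · set r := z1 + z2 - nL with hr
    have hz1r : r ≤ z1 := by omega
    have hz2r : r ≤ z2 := by omega
    have hsplit : z1 + z2 = nL + r := by omega
    rw [hsplit, Pfun_shift hper]
    have hnL : nL = z1 + (nL - z1) := by omega
    have hz2 : z2 = r + (z2 - r) := by omega
    have e1 : Pfun a nL = Pfun a z1 + ∑ i ∈ Finset.range (nL - z1), a (z1 + i) := by
      conv_lhs => rw [show nL = z1 + (nL - z1) by omega]
      rw [Pfun_add]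
    have e2 : Pfun a z2 = Pfun a r + ∑ i ∈ Finset.range (z2 - r), a (r + i) := by
      conv_lhs => rw [show z2 = r + (z2 - r) by omega]
      rw [Pfun_add]
    have hlen : nL - z1 = z2 - r := by omega
    rw [e1, e2]
    have hsum : ∑ i ∈ Finset.range (nL - z1), a (z1 + i)
        ≤ ∑ i ∈ Finset.range (z2 - r), a (r + i) := by
      rw [hlen]
      refine Finset.sum_le_sum fun i hi => ?_
      have hi' := Finset.mem_range.1 hi
      exact hmono (r + i) (z1 + i) (by omega) (by omega)
    omega

lemma Pfun_subadd {a : ℕ → ℕ} {nL : ℕ} (hnL : 0 < nL) (hper : ∀ i, a (i + nL) = a i)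
    (hmono : ∀ i j, i ≤ j → j < nL → a j ≤ a i) (s : ℕ) {z : ℕ} (hz : z ≤ nL) :
    Pfun a (s + z) ≤ Pfun a s + Pfun a z := by
  have hs : s = s / nL * nL + s % nL := by
    rw [mul_comm]; exact (Nat.div_add_mod s nL).symm
  have h1 : s + z = s / nL * nL + (s % nL + z) := by omega
  rw [h1, Pfun_mul_add hper]
  have h2 : Pfun a (s % nL + z) ≤ Pfun a (s % nL) + Pfun a z :=
    Pfun_subadd_small hper hmono (le_of_lt (Nat.mod_lt _ hnL)) hz
  have h3 : Pfun a s = s / nL * Pfun a nL + Pfun a (s % nL) := by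
    conv_lhs => rw [hs]
    exact Pfun_mul_add hper _ _
  omega

lemma Pfun_sum_le {a : ℕ → ℕ} {nL : ℕ} (hnL : 0 < nL) (hper : ∀ i, a (i + nL) = a i)
    (hmono : ∀ i j, i ≤ j → j < nL → a j ≤ a i) {t : ℕ} (z : Fin t → ℕ)
    (hz : ∀ b, z b ≤ nL) :
    Pfun a (∑ b, z b) ≤ ∑ b, Pfun a (z b) := by
  have : ∀ S : Finset (Fin t), Pfun a (∑ b ∈ S, z b) ≤ ∑ b ∈ S, Pfun a (z b) := by
    intro S
    induction S using Finset.induction_on with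
    | empty => simp [Pfun]
    | @insert b S' hx ih =>
        rw [Finset.sum_insert hx, Finset.sum_insert hx, add_comm (z b)]
        calc Pfun a (∑ b ∈ S', z b + z b)
            ≤ Pfun a (∑ b ∈ S', z b) + Pfun a (z b) :=
              Pfun_subadd hnL hper hmono _ (hz b)
          _ ≤ ∑ b ∈ S', Pfun a (z b) + Pfun a (z b) := by omega
        omega
  exact this Finset.univ

end ArithAux

section FieldAux

lemma powQ_linear {F : Type*} [Field F] (Fq : Subfield F) [Fintype Fq] (l : ℕ) :
    ∃ φ : F →ₗ[Fq] F, ∀ x, φ x = x ^ (Fintype.card Fq) ^ l := by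
  haveI := ringChar.charP Fq
  obtain ⟨e, hp, hc⟩ := FiniteField.card Fq (ringChar Fq)
  haveI : Fact (ringChar Fq).Prime := ⟨hp⟩
  haveI : CharP F (ringChar Fq) :=
    charP_of_injective_ringHom (Fq.subtype.injective) (ringChar Fq)
  have hadd : ∀ x y : F, (x + y) ^ (Fintype.card Fq) ^ l
      = x ^ (Fintype.card Fq) ^ l + y ^ (Fintype.card Fq) ^ l := by
    intro x y
    rw [hc, ← pow_mul]
    exact add_pow_char_pow x y _ _
  have hsmul : ∀ (c : Fq) (x : F), ((c : F) * x) ^ (Fintype.card Fq) ^ l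
      = (c : F) * x ^ (Fintype.card Fq) ^ l := by
    intro c x
    rw [mul_pow]
    congr 1
    have h1 : ((c : F)) ^ (Fintype.card Fq) ^ l = ((c ^ ((Fintype.card Fq) ^ l) : Fq) : F) := by
      norm_cast
    rw [h1, FiniteField.pow_card_pow]
  refine ⟨{ toFun := fun x => x ^ (Fintype.card Fq) ^ l,
            map_add' := hadd,
            map_smul' := ?_ }, fun _ => rfl⟩
  intro c x
  simp only [RingHom.id_apply]
  have hd : ∀ y : F, c • y = (c : F) * y := fun y => rfl
  rw [hd, hd, hsmul]

lemma moore_vanish {F : Type*} [Field F] (Fq : Subfield F) [Fintype Fq]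
    {ι : Type*} [Fintype ι] {K : ℕ} (hK : K ≤ Fintype.card ι)
    (v : ι → F) (hv : LinearIndependent Fq v)
    (w : Fin K → F) (h0 : ∀ i, ∑ l : Fin K, w l * v i ^ (Fintype.card Fq) ^ (l : ℕ) = 0) :
    w = 0 := by
  classical
  by_contra hw
  obtain ⟨l₀, hl₀⟩ : ∃ l, w l ≠ 0 := by
    by_contra h; push_neg at h; exact hw (funext h)
  set q := Fintype.card Fq with hq
  have hq2 : 2 ≤ q := Fintype.one_lt_card
  choose φ hφ using fun l : ℕ => powQ_linear Fq l
  let fh : F →ₗ[Fq] F :=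
    { toFun := fun x => ∑ l : Fin K, w l * x ^ q ^ (l : ℕ)
      map_add' := by
        intro x y
        rw [← Finset.sum_add_distrib]
        refine Finset.sum_congr rfl fun l _ => ?_
        rw [← hφ, ← hφ, ← hφ, map_add, mul_add]
      map_smul' := by
        intro c x
        simp only [RingHom.id_apply]
        rw [Finset.smul_sum]
        refine Finset.sum_congr rfl fun l _ => ?_
        rw [← hφ, ← hφ, map_smul]
        have hd : ∀ y : F, c • y = (c : F) * y := fun y => rfl
        rw [hd, hd]; ring }
  have fh_apply : ∀ x, fh x = ∑ l : Fin K, w l * x ^ q ^ (l : ℕ) := fun _ => rfl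
  -- the span of v
  set W : Submodule Fq F := Submodule.span Fq (Set.range v) with hW
  haveI : Module.Finite Fq W := FiniteDimensional.span_of_finite Fq (Set.finite_range v)
  haveI : Finite W := Module.finite_of_finite Fq
  haveI : Fintype W := Fintype.ofFinite W
  have hfrW : Module.finrank Fq W = Fintype.card ι := finrank_span_eq_card hv
  have hcardW : Fintype.card W = q ^ Fintype.card ι := by
    rw [Module.card_eq_pow_finrank (K := Fq) (V := W), hfrW]
  have hker : ∀ x ∈ W, fh x = 0 := by
    intro x hx
    have : W ≤ LinearMap.ker fh := by
      rw [hW, Submodule.span_le]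
      rintro _ ⟨i, rfl⟩
      simp only [SetLike.mem_coe, LinearMap.mem_ker]
      rw [fh_apply]; exact h0 i
    exact this hx
  -- the polynomial
  set P : Polynomial F := ∑ l : Fin K, Polynomial.C (w l) * Polynomial.X ^ (q ^ (l : ℕ)) with hP
  have hPcoeff : P.coeff (q ^ (l₀ : ℕ)) = w l₀ := by
    rw [hP, Polynomial.finset_sum_coeff]
    rw [Finset.sum_eq_single l₀]
    · simp
    · intro l _ hl
      rw [Polynomial.coeff_C_mul, Polynomial.coeff_X_pow, if_neg, mul_zero]
      intro h
      exact hl (Fin.ext (Nat.pow_right_injective hq2 h.symm))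
    · simp
  have hP0 : P ≠ 0 := fun h => hl₀ (by rw [← hPcoeff, h, Polynomial.coeff_zero])
  have hdeg : P.natDegree ≤ q ^ (K - 1) := by
    rw [hP]
    refine Polynomial.natDegree_sum_le_of_forall_le _ _ fun l _ => ?_
    calc (Polynomial.C (w l) * Polynomial.X ^ (q ^ (l : ℕ))).natDegree
        ≤ (Polynomial.X ^ (q ^ (l : ℕ)) : Polynomial F).natDegree :=
          Polynomial.natDegree_C_mul_le _ _
      _ = q ^ (l : ℕ) := Polynomial.natDegree_X_pow _
      _ ≤ q ^ (K - 1) := Nat.pow_le_pow_right (by omega) (by omega)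
  have hroot : ∀ x ∈ W, P.IsRoot x := by
    intro x hx
    have := hker x hx
    rw [fh_apply] at this
    simp only [Polynomial.IsRoot, hP, Polynomial.eval_finset_sum, Polynomial.eval_mul,
      Polynomial.eval_C, Polynomial.eval_pow, Polynomial.eval_X]
    exact this
  -- counting
  have hcmp : Fintype.card W ≤ P.roots.toFinset.card := by
    rw [← Finset.card_univ]
    apply Finset.card_le_card_of_injOn (fun x : W => (x : F))
    · intro x _
      rw [Finset.mem_coe, Multiset.mem_toFinset, Polynomial.mem_roots hP0]
      exact hroot _ x.2
    · intro x _ y _ h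
      exact Subtype.ext h
  have hchain : q ^ Fintype.card ι ≤ q ^ (K - 1) := by
    calc q ^ Fintype.card ι = Fintype.card W := hcardW.symm
      _ ≤ P.roots.toFinset.card := hcmp
      _ ≤ Multiset.card P.roots := Multiset.toFinset_card_le _
      _ ≤ P.natDegree := Polynomial.card_roots' P
      _ ≤ q ^ (K - 1) := hdeg
  have hKpos : 0 < K := l₀.pos
  have : q ^ (K - 1) < q ^ K := Nat.pow_lt_pow_right (by omega) (by omega)
  have : q ^ K ≤ q ^ Fintype.card ι := Nat.pow_le_pow_right (by omega) hK
  omega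

end FieldAux


set_option synthInstance.maxHeartbeats 1000000
set_option maxHeartbeats 4000000

/-- **Theorem 2: all-symbol locality construction.**  Let `q` be a prime
power, `Fq` a subfield with `q` elements of a field `F` with `[F : Fq] = m`.  Let
`nL, α, t, K` be positive integers, `a_1 ≥ … ≥ a_{nL} ≥ 0` a profile with
`K_L := P(nL) ≥ 1` (0-indexed periodic extension `a`), and assume `K ≤ t·K_L` and
`m ≥ t·K_L`.  Let `B` be a `K_L × (nL·α)` URA matrix over `Fq` with this profile, let
`G_BASIC` be the block-diagonal matrix with `t` diagonal copies of `B` (so `G_BASIC` has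
`n := t·nL` thick columns of width `α`), and let `θ` be a family of `t·K_L` elements of `F`
linearly independent over `Fq`.  Let `C` consist of all vectors
`(f(θ_1),…,f(θ_{tK_L}))·G_BASIC` where `f` ranges over linearized polynomials of
`q`-degree at most `K - 1` over `F` (encoded by coefficient vectors `u : Fin K → F`).
Then the encoding map is injective, and the minimum thick Hamming distance of `C`, viewed
as a length-`n` code over the alphabet `F^α`, is exactly `d_min = n - P^{inv}(K) + 1`;
in particular the construction attains the bound `d_min ≤ n - P^{inv}(K) + 1`. -/
theorem stmt_9 (q m nL α t K : ℕ) (hq : IsPrimePow q)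
    (hnL : 0 < nL) (hα : 0 < α) (ht : 0 < t) (hK : 0 < K)
    (a : ℕ → ℕ) (hper : ∀ i, a (i + nL) = a i)
    (hmono : ∀ i j, i ≤ j → j < nL → a j ≤ a i)
    (hKL : 1 ≤ Pfun a nL)
    (hKtKL : K ≤ t * Pfun a nL) (hm : t * Pfun a nL ≤ m)
    (F : Type*) [Field F] (Fq : Subfield F) [Fintype Fq]
    (hcard : Fintype.card Fq = q) (hmF : Module.finrank Fq F = m)
    (B : Matrix (Fin (Pfun a nL)) (Fin nL × Fin α) Fq)
    (hB : ∀ S : Finset (Fin nL), thickRank B S = Pfun a S.card)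
    (G : Matrix (Fin t × Fin (Pfun a nL)) ((Fin t × Fin nL) × Fin α) Fq)
    (hG : ∀ b i b' j c, G (b, i) ((b', j), c) = if b = b' then B i (j, c) else 0)
    (θ : Fin t × Fin (Pfun a nL) → F) (hθ : LinearIndependent Fq θ)
    (enc : (Fin K → F) → ((Fin t × Fin nL) × Fin α → F))
    (henc : ∀ u p, enc u p = ∑ i, (∑ l, u l * θ i ^ q ^ (l : ℕ)) * (G i p : F)) :
    Function.Injective enc
    ∧ (∀ u v, u ≠ v → t * nL - Pinv a K + 1 ≤ thickDist (enc u) (enc v))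
    ∧ (∃ u v, u ≠ v ∧ thickDist (enc u) (enc v) = t * nL - Pinv a K + 1) := by
  classical
  subst hcard
  -- ## arithmetic facts about Pinv
  have hPtop : Pfun a (t * nL) = t * Pfun a nL := by simpa [show Pfun a 0 = 0 from rfl] using Pfun_mul_add hper t 0
  have hne : (t * nL) ∈ {s : ℕ | K ≤ Pfun a s} := by
    simp only [Set.mem_setOf_eq, hPtop]; exact hKtKL
  have hPinv_mem : K ≤ Pfun a (Pinv a K) := Nat.sInf_mem (⟨t * nL, hne⟩ : Set.Nonempty _)
  have hPinv_le : Pinv a K ≤ t * nL := Nat.sInf_le hne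
  have hPinv_pos : 1 ≤ Pinv a K := by
    rcases Nat.eq_zero_or_pos (Pinv a K) with h | h
    · exfalso; rw [h] at hPinv_mem; simp only [Pfun, Finset.range_zero,
        Finset.sum_empty] at hPinv_mem; omega
    · exact h
  have hPlt : ∀ s, s < Pinv a K → Pfun a s < K := by
    intro s hs
    by_contra h
    have : Pinv a K ≤ s := Nat.sInf_le (by simpa using Nat.le_of_not_lt h)
    omega
  -- ## field machinery
  choose φ hφ using fun l : ℕ => powQ_linear Fq l
  have hd : ∀ (c : Fq) (y : F), c • y = (c : F) * y := fun _ _ => rfl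
  let fh : (Fin K → F) → (F →ₗ[Fq] F) := fun w =>
    { toFun := fun x => ∑ l : Fin K, w l * x ^ (Fintype.card Fq) ^ (l : ℕ)
      map_add' := by
        intro x y
        rw [← Finset.sum_add_distrib]
        exact Finset.sum_congr rfl fun l _ => by rw [← hφ, ← hφ, ← hφ, map_add, mul_add]
      map_smul' := by
        intro c x
        simp only [RingHom.id_apply]
        rw [Finset.smul_sum]
        refine Finset.sum_congr rfl fun l _ => ?_
        rw [← hφ, ← hφ, map_smul, hd, hd]; ring }
  have fh_apply : ∀ w x, fh w x = ∑ l : Fin K, w l * x ^ (Fintype.card Fq) ^ (l : ℕ) :=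
    fun _ _ => rfl
  let η : ((Fin t × Fin nL) × Fin α) → F := fun p => ∑ i, (G i p : F) * θ i
  have hEnc : ∀ w p, enc w p = fh w (η p) := by
    intro w p
    rw [henc]
    have h1 : η p = ∑ i, G i p • θ i := Finset.sum_congr rfl fun i _ => (hd _ _).symm
    calc ∑ i, (∑ l, w l * θ i ^ (Fintype.card Fq) ^ (l : ℕ)) * (G i p : F)
        = ∑ i, (G i p : F) * fh w (θ i) := by
          refine Finset.sum_congr rfl fun i _ => ?_
          rw [fh_apply]; ring
      _ = ∑ i, G i p • fh w (θ i) := Finset.sum_congr rfl fun i _ => (hd _ _).symm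
      _ = fh w (∑ i, G i p • θ i) := by
          rw [map_sum]
          exact Finset.sum_congr rfl fun i _ => ((fh w).map_smul _ _).symm
      _ = fh w (η p) := by rw [← h1]
  let T : Fin t → ((Fin (Pfun a nL) → Fq) →ₗ[Fq] F) := fun b =>
    { toFun := fun lam => ∑ i', lam i' • θ (b, i')
      map_add' := by
        intro x y
        rw [← Finset.sum_add_distrib]
        exact Finset.sum_congr rfl fun i' _ => add_smul _ _ _
      map_smul' := by
        intro c x
        simp only [RingHom.id_apply]
        rw [Finset.smul_sum]
        exact Finset.sum_congr rfl fun i' _ => by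
          rw [smul_smul]; rfl }
  have hT_apply : ∀ b lam, T b lam = ∑ i', lam i' • θ (b, i') := fun _ _ => rfl
  have hηB : ∀ (b : Fin t) (j : Fin nL) (cα : Fin α),
      η ((b, j), cα) = T b (fun i' => B i' (j, cα)) := by
    intro b j cα
    show ∑ i : Fin t × Fin (Pfun a nL), (G i ((b,j),cα) : F) * θ i = _
    rw [Fintype.sum_prod_type]
    have hsum : ∀ b' : Fin t,
        ∑ i' : Fin (Pfun a nL), (G (b',i') ((b,j),cα) : F) * θ (b',i')
        = if b' = b then ∑ i' : Fin (Pfun a nL), (B i' (j,cα) : F) * θ (b,i') else 0 := by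
      intro b'
      by_cases hbb : b' = b
      · subst hbb
        rw [if_pos rfl]
        refine Finset.sum_congr rfl fun i' _ => ?_
        rw [hG]; simp
      · rw [if_neg hbb]
        refine Finset.sum_eq_zero fun i' _ => ?_
        rw [hG, if_neg hbb]; simp
    rw [Finset.sum_congr rfl fun b' _ => hsum b', Finset.sum_ite_eq' Finset.univ b]
    simp only [Finset.mem_univ, if_true]
    rw [hT_apply]
    exact Finset.sum_congr rfl fun i' _ => (hd _ _).symm
  -- column spaces
  let colsp : Finset (Fin nL) → Submodule Fq (Fin (Pfun a nL) → Fq) := fun S =>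
    Submodule.span Fq (Set.range fun p : {p : Fin nL × Fin α // p.1 ∈ S} =>
      fun i => B i (p : Fin nL × Fin α))
  haveI hcolspFin : ∀ S : Finset (Fin nL), Module.Finite Fq (colsp S) := fun S =>
    FiniteDimensional.span_of_finite Fq (Set.finite_range _)
  have hcolsp : ∀ S : Finset (Fin nL), Module.finrank Fq (colsp S) = Pfun a S.card := by
    intro S
    rw [← hB S]
    rw [show thickRank B S = Module.finrank Fq (LinearMap.range
      (B.submatrix id (fun p : {p : Fin nL × Fin α // p.1 ∈ S} =>
        (p : Fin nL × Fin α))).mulVecLin) from rfl]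
    rw [Matrix.range_mulVecLin]
    rfl
  have hvanish : ∀ (w : Fin K → F) (b : Fin t) (S : Finset (Fin nL)),
      (∀ j ∈ S, ∀ cα, enc w ((b, j), cα) = 0) →
      ∀ x ∈ colsp S, fh w (T b x) = 0 := by
    intro w b S hzero x hx
    have hle : colsp S ≤ LinearMap.ker ((fh w).comp (T b)) := by
      rw [show colsp S = Submodule.span Fq (Set.range fun p : {p : Fin nL × Fin α // p.1 ∈ S} =>
        fun i => B i (p : Fin nL × Fin α)) from rfl, Submodule.span_le]
      rintro _ ⟨⟨⟨j, cα⟩, hp⟩, rfl⟩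
      simp only [SetLike.mem_coe, LinearMap.mem_ker, LinearMap.coe_comp, Function.comp_apply]
      show fh w (T b (fun i => B i (j, cα))) = 0
      rw [← hηB b j cα, ← hEnc]
      exact hzero j hp cα
    exact hle hx
  -- ## the key cardinality bound on zero sets of nonzero codewords
  have key : ∀ w : Fin K → F, w ≠ 0 →
      (Finset.univ.filter fun pos : Fin t × Fin nL =>
        ∀ cα, enc w (pos, cα) = 0).card < Pinv a K := by
    intro w hw
    set Z := Finset.univ.filter (fun pos : Fin t × Fin nL => ∀ cα, enc w (pos, cα) = 0)
      with hZ
    set Sb : Fin t → Finset (Fin nL) := fun b => Finset.univ.filter (fun j => (b, j) ∈ Z)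
      with hSbdef
    set z : Fin t → ℕ := fun b => (Sb b).card with hzdef
    have hzcard : Z.card = ∑ b, z b := by
      rw [Finset.card_filter, Fintype.sum_prod_type]
      refine Finset.sum_congr rfl fun b _ => ?_
      rw [hzdef]
      simp only
      rw [hSbdef]
      simp only
      rw [Finset.card_filter]
      refine Finset.sum_congr rfl fun j _ => ?_
      refine if_congr ?_ rfl rfl
      rw [hZ]
      simp only [Finset.mem_filter, Finset.mem_univ, true_and]
    have hzle : ∀ b, z b ≤ nL := by
      intro b
      calc z b ≤ Finset.univ.card := Finset.card_filter_le _ _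
        _ = nL := by simp
    have hrank : ∑ b, Pfun a (z b) < K := by
      by_contra hge
      push_neg at hge
      have hfr : ∀ b, Module.finrank Fq (colsp (Sb b)) = Pfun a (z b) := fun b => hcolsp (Sb b)
      let bas : ∀ b : Fin t, Module.Basis (Fin (Pfun a (z b))) Fq (colsp (Sb b)) := fun b =>
        (Module.finBasis Fq (colsp (Sb b))).reindex (finCongr (hfr b))
      let ξ : (Σ b : Fin t, Fin (Pfun a (z b))) → F := fun s =>
        T s.1 ((bas s.1 s.2 : Fin (Pfun a nL) → Fq))
      have hξ0 : ∀ s, fh w (ξ s) = 0 := by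
        rintro ⟨b, k⟩
        refine hvanish w b (Sb b) ?_ _ (bas b k).2
        intro j hj cα
        have hmem : (b, j) ∈ Z := by
          rw [hSbdef] at hj
          simpa using hj
        rw [hZ, Finset.mem_filter] at hmem
        exact hmem.2 cα
      have hξindep : LinearIndependent Fq ξ := by
        rw [Fintype.linearIndependent_iff]
        intro g hg
        have htrans : ∑ pr : Fin t × Fin (Pfun a nL),
            (∑ k, g ⟨pr.1, k⟩ * (bas pr.1 k : Fin (Pfun a nL) → Fq) pr.2) • θ pr = 0 := by
          calc ∑ pr : Fin t × Fin (Pfun a nL),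
              (∑ k, g ⟨pr.1, k⟩ * (bas pr.1 k : Fin (Pfun a nL) → Fq) pr.2) • θ pr
              = ∑ b, ∑ i', (∑ k, g ⟨b, k⟩ * (bas b k : Fin (Pfun a nL) → Fq) i') • θ (b, i') := by
                rw [Fintype.sum_prod_type]
            _ = ∑ b, ∑ i', ∑ k, (g ⟨b, k⟩ * (bas b k : Fin (Pfun a nL) → Fq) i') • θ (b, i') := by
                refine Finset.sum_congr rfl fun b _ => Finset.sum_congr rfl fun i' _ => ?_
                rw [Finset.sum_smul]
            _ = ∑ b, ∑ k, ∑ i', (g ⟨b, k⟩ * (bas b k : Fin (Pfun a nL) → Fq) i') • θ (b, i') := by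
                exact Finset.sum_congr rfl fun b _ => Finset.sum_comm
            _ = ∑ b, ∑ k, g ⟨b, k⟩ •
                  ∑ i', (bas b k : Fin (Pfun a nL) → Fq) i' • θ (b, i') := by
                refine Finset.sum_congr rfl fun b _ => Finset.sum_congr rfl fun k _ => ?_
                rw [Finset.smul_sum]
                exact Finset.sum_congr rfl fun i' _ => (smul_smul _ _ _).symm
            _ = ∑ s : (Σ b : Fin t, Fin (Pfun a (z b))), g s • ξ s := by
                rw [← Finset.univ_sigma_univ, Finset.sum_sigma]
                exact Finset.sum_congr rfl fun b _ => Finset.sum_congr rfl fun k _ => rfl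
            _ = 0 := hg
        have hco := fun pr => Fintype.linearIndependent_iff.1 hθ _ htrans pr
        rintro ⟨b, k⟩
        have hbas : LinearIndependent Fq
            (fun k : Fin (Pfun a (z b)) => ((bas b k : Fin (Pfun a nL) → Fq))) :=
          (bas b).linearIndependent.map' (colsp (Sb b)).subtype (Submodule.ker_subtype _)
        refine Fintype.linearIndependent_iff.1 hbas (fun k => g ⟨b, k⟩) ?_ k
        funext i'
        have := hco (b, i')
        simpa using this
      have hcards : K ≤ Fintype.card (Σ b : Fin t, Fin (Pfun a (z b))) := by
        rw [Fintype.card_sigma]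
        simpa using hge
      exact hw (moore_vanish Fq hcards ξ hξindep w
        (fun s => by rw [← fh_apply]; exact hξ0 s))
    have hsum : Pfun a Z.card ≤ ∑ b, Pfun a (z b) := by
      rw [hzcard]; exact Pfun_sum_le hnL hper hmono z hzle
    by_contra hcon
    push_neg at hcon
    have : K ≤ Pfun a Z.card := le_trans hPinv_mem (Pfun_mono a hcon)
    omega
  -- ## distance formula
  have enc_sub : ∀ u v : Fin K → F, ∀ p, enc (u - v) p = enc u p - enc v p := by
    intro u v p
    simp only [henc, Pi.sub_apply, sub_mul, Finset.sum_sub_distrib]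
  have henc0 : ∀ p, enc 0 p = 0 := by
    intro p
    simp [henc]
  have hdist_eq : ∀ u v : Fin K → F,
      thickDist (enc u) (enc v)
        = t * nL - (Finset.univ.filter fun pos : Fin t × Fin nL =>
            ∀ cα, enc (u - v) (pos, cα) = 0).card := by
    intro u v
    have hcompl := Finset.card_filter_add_card_filter_not
      (s := (Finset.univ : Finset (Fin t × Fin nL)))
      (p := fun j => ∃ a', enc u (j, a') ≠ enc v (j, a'))
    have h1 : (Finset.univ.filter fun j : Fin t × Fin nL =>
          ¬ ∃ a', enc u (j, a') ≠ enc v (j, a'))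
        = (Finset.univ.filter fun pos : Fin t × Fin nL =>
            ∀ cα, enc (u - v) (pos, cα) = 0) := by
      refine Finset.filter_congr fun j _ => ?_
      rw [not_exists]
      constructor
      · intro h cα
        rw [enc_sub, sub_eq_zero]
        exact not_ne_iff.1 (h cα)
      · intro h cα
        rw [not_ne_iff, ← sub_eq_zero, ← enc_sub]
        exact h cα
    rw [h1] at hcompl
    have hcu : (Finset.univ : Finset (Fin t × Fin nL)).card = t * nL := by simp
    show (Finset.univ.filter fun j : Fin t × Fin nL =>
      ∃ a', enc u (j, a') ≠ enc v (j, a')).card = _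
    omega
  -- ## injectivity
  have hinj : Function.Injective enc := by
    intro u v huv
    by_contra hne2
    have hw0 : u - v ≠ 0 := sub_ne_zero.2 hne2
    have hall : (Finset.univ.filter fun pos : Fin t × Fin nL =>
        ∀ cα, enc (u - v) (pos, cα) = 0) = Finset.univ := by
      refine Finset.filter_true_of_mem fun pos _ => fun cα => ?_
      rw [enc_sub, huv, sub_self]
    have := key (u - v) hw0
    rw [hall] at this
    have hcu : (Finset.univ : Finset (Fin t × Fin nL)).card = t * nL := by simp
    omega
  refine ⟨hinj, ?_, ?_⟩
  -- ## lower bound on distance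
  · intro u v huv
    have hw0 : u - v ≠ 0 := sub_ne_zero.2 huv
    have hk := key (u - v) hw0
    have hle : (Finset.univ.filter fun pos : Fin t × Fin nL =>
        ∀ cα, enc (u - v) (pos, cα) = 0).card ≤ t * nL := by
      calc _ ≤ (Finset.univ : Finset (Fin t × Fin nL)).card := Finset.card_filter_le _ _
        _ = t * nL := by simp
    rw [hdist_eq u v]
    omega
  · -- existence of a pair attaining the bound
    set s0 := Pinv a K - 1 with hs0def
    have hs0lt : s0 < Pinv a K := by omega
    have hs0n : s0 < t * nL := by omega
    have hrlt : s0 % nL < nL := Nat.mod_lt _ hnL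
    have hjqt : s0 / nL < t := (Nat.div_lt_iff_lt_mul hnL).2 (by omega)
    set jq := s0 / nL with hjqdef
    set r := s0 % nL with hrdef
    have hjr : jq * nL + r = s0 := by
      rw [hjqdef, hrdef, mul_comm]; exact Nat.div_add_mod s0 nL
    have hPs0 : Pfun a s0 < K := hPlt s0 hs0lt
    have hPs0split : jq * Pfun a nL + Pfun a r = Pfun a s0 := by
      rw [← hjr]; exact (Pfun_mul_add hper jq r).symm
    -- the prefix set of size r
    set Spre : Finset (Fin nL) := Finset.univ.filter (fun j : Fin nL => (j : ℕ) < r)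
      with hSpre
    have hSprecard : Spre.card = r := by
      have hinj3 : Set.InjOn Fin.val (Spre : Set (Fin nL)) := fun x _ y _ h => Fin.ext h
      rw [← Finset.card_image_of_injOn hinj3]
      have himg : Spre.image Fin.val = Finset.range r := by
        ext x
        simp only [hSpre, Finset.mem_image, Finset.mem_filter, Finset.mem_univ, true_and,
          Finset.mem_range]
        constructor
        · rintro ⟨j, hj, rfl⟩; exact hj
        · intro hx; exact ⟨⟨x, lt_trans hx hrlt⟩, hx, rfl⟩
      rw [himg, Finset.card_range]
    -- the zero pattern Z0
    set Z0 : Finset (Fin t × Fin nL) :=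
      Finset.univ.filter (fun pos : Fin t × Fin nL => (pos.1 : ℕ) * nL + (pos.2 : ℕ) < s0)
      with hZ0
    have hZ0card : Z0.card = s0 := by
      have hinj4 : Set.InjOn (fun p : Fin t × Fin nL => (p.1 : ℕ) * nL + (p.2 : ℕ))
          (Z0 : Set (Fin t × Fin nL)) := by
        intro p _ p' _ hpp
        simp only at hpp
        have hlt : (p.2 : ℕ) < nL := p.2.isLt
        have hlt' : (p'.2 : ℕ) < nL := p'.2.isLt
        have e1 : ((p.1 : ℕ) * nL + (p.2 : ℕ)) / nL = (p.1 : ℕ) := by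
          rw [mul_comm, Nat.mul_add_div hnL, Nat.div_eq_of_lt hlt]
          omega
        have e2 : ((p'.1 : ℕ) * nL + (p'.2 : ℕ)) / nL = (p'.1 : ℕ) := by
          rw [mul_comm, Nat.mul_add_div hnL, Nat.div_eq_of_lt hlt']
          omega
        have h1 : (p.1 : ℕ) = (p'.1 : ℕ) := by rw [← e1, ← e2, hpp]
        have h1' : (p.1 : ℕ) * nL = (p'.1 : ℕ) * nL := by rw [h1]
        have h2 : (p.2 : ℕ) = (p'.2 : ℕ) := by omega
        exact Prod.ext (Fin.ext h1) (Fin.ext h2)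
      rw [← Finset.card_image_of_injOn hinj4]
      have himg : Z0.image (fun p : Fin t × Fin nL => (p.1 : ℕ) * nL + (p.2 : ℕ))
          = Finset.range s0 := by
        ext x
        simp only [hZ0, Finset.mem_image, Finset.mem_filter, Finset.mem_univ, true_and,
          Finset.mem_range]
        constructor
        · rintro ⟨p, hp, rfl⟩; exact hp
        · intro hx
          refine ⟨(⟨x / nL, (Nat.div_lt_iff_lt_mul hnL).2 (lt_trans hx hs0n)⟩,
                   ⟨x % nL, Nat.mod_lt _ hnL⟩), ?_, ?_⟩
          · show x / nL * nL + x % nL < s0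
            rw [mul_comm, Nat.div_add_mod]
            exact hx
          · show x / nL * nL + x % nL = x
            rw [mul_comm]; exact Nat.div_add_mod x nL
      rw [himg, Finset.card_range]
    have hmemZ0 : ∀ (b : Fin t) (j : Fin nL),
        ((b, j) ∈ Z0) ↔ ((b : ℕ) < jq ∨ ((b : ℕ) = jq ∧ (j : ℕ) < r)) := by
      intro b j
      rw [hZ0]
      simp only [Finset.mem_filter, Finset.mem_univ, true_and]
      have hjlt : (j : ℕ) < nL := j.isLt
      constructor
      · intro h
        rcases lt_trichotomy (b : ℕ) jq with hb | hb | hb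
        · exact Or.inl hb
        · refine Or.inr ⟨hb, ?_⟩
          rw [hb] at h
          omega
        · exfalso
          have h2 : (jq + 1) * nL ≤ (b : ℕ) * nL := Nat.mul_le_mul_right _ hb
          have h3 : jq * nL + nL = (jq + 1) * nL := by ring
          omega
      · rintro (hb | ⟨hb, hj⟩)
        · have h2 : ((b : ℕ) + 1) * nL ≤ jq * nL := Nat.mul_le_mul_right _ hb
          have h3 : (b : ℕ) * nL + nL = ((b : ℕ) + 1) * nL := by ring
          omega
        · rw [hb]; omega
    -- the subspace V = T_jq(column space of the prefix)
    set Tjq := T ⟨jq, hjqt⟩ with hTjq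
    set V : Submodule Fq F := (colsp Spre).map Tjq with hV
    haveI : Module.Finite Fq V := Module.Finite.map _ _
    have hdV : Module.finrank Fq V ≤ Pfun a r := by
      calc Module.finrank Fq V ≤ Module.finrank Fq (colsp Spre) :=
            Submodule.finrank_map_le _ _
        _ = Pfun a r := by rw [hcolsp, hSprecard]
    set dV := Module.finrank Fq V with hdVdef
    let basV : Module.Basis (Fin dV) Fq V := Module.finBasis Fq V
    let ζ : ((Fin jq × Fin (Pfun a nL)) ⊕ Fin dV) → F := fun x =>
      Sum.rec (fun bi => θ (⟨(bi.1 : ℕ), lt_trans bi.1.isLt hjqt⟩, bi.2))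
        (fun k => (basV k : F)) x
    set W : Submodule Fq F := Submodule.span Fq (Set.range ζ) with hWdef
    have hVW : V ≤ W := by
      have h4 : V = Submodule.map V.subtype ⊤ := (Submodule.map_subtype_top V).symm
      rw [h4, ← basV.span_eq, Submodule.map_span, hWdef]
      apply Submodule.span_mono
      rintro _ ⟨_, ⟨k, rfl⟩, rfl⟩
      exact ⟨Sum.inr k, rfl⟩
    have hdW : Module.finrank Fq W ≤ K - 1 := by
      have h5 : Module.finrank Fq W ≤ jq * Pfun a nL + dV := by
        calc Module.finrank Fq W ≤ (Set.range ζ).toFinset.card := finrank_span_le_card _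
          _ ≤ Fintype.card ((Fin jq × Fin (Pfun a nL)) ⊕ Fin dV) := by
              rw [Set.toFinset_range]
              exact le_trans Finset.card_image_le (by simp)
          _ = jq * Pfun a nL + dV := by simp
      omega
    -- all η's over Z0 lie in W
    have hηW : ∀ (b : Fin t) (j : Fin nL), (b, j) ∈ Z0 → ∀ cα, η ((b, j), cα) ∈ W := by
      intro b j hbj cα
      rcases (hmemZ0 b j).1 hbj with hb | ⟨hb, hj⟩
      · rw [hηB, hT_apply]
        refine Submodule.sum_mem _ fun i' _ => Submodule.smul_mem _ _ ?_
        apply Submodule.subset_span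
        refine ⟨Sum.inl (⟨(b : ℕ), hb⟩, i'), ?_⟩
        show θ (⟨(b : ℕ), _⟩, i') = θ (b, i')
        congr 1
      · have hcol : (fun i => B i (j, cα)) ∈ colsp Spre := by
          apply Submodule.subset_span
          refine ⟨⟨(j, cα), ?_⟩, rfl⟩
          rw [hSpre]
          simp only [Finset.mem_filter, Finset.mem_univ, true_and]
          exact hj
        have hbeq : b = ⟨jq, hjqt⟩ := Fin.ext hb
        rw [hηB, hbeq]
        exact hVW (Submodule.mem_map_of_mem hcol)
    -- choose a nonzero coefficient vector w annihilating W
    set dW := Module.finrank Fq W with hdWdef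
    haveI : Module.Finite Fq W := FiniteDimensional.span_of_finite Fq (Set.finite_range ζ)
    let basW : Module.Basis (Fin dW) Fq W := Module.finBasis Fq W
    let Mth : Matrix (Fin dW) (Fin K) F := fun k l =>
      (basW k : F) ^ (Fintype.card Fq) ^ (l : ℕ)
    have hnotinj : ¬ Function.Injective Mth.mulVecLin := by
      intro hinj2
      have h6 := LinearMap.finrank_le_finrank_of_injective hinj2
      rw [Module.finrank_fin_fun, Module.finrank_fin_fun] at h6
      omega
    obtain ⟨x, y, hxy, hne2⟩ := Function.not_injective_iff.1 hnotinj
    set w := x - y with hwdef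
    have hw0 : w ≠ 0 := sub_ne_zero.2 hne2
    have hMw : Mth.mulVec w = 0 := by
      have h7 : Mth.mulVecLin w = 0 := by
        rw [hwdef, map_sub, hxy, sub_self]
      rwa [Matrix.mulVecLin_apply] at h7
    have hfbas : ∀ k, fh w ((basW k : F)) = 0 := by
      intro k
      have h8 : Mth.mulVec w k = 0 := congrFun hMw k
      rw [fh_apply, ← h8]
      simp only [Matrix.mulVec, dotProduct]
      exact Finset.sum_congr rfl fun l _ => mul_comm _ _
    have hfW : ∀ xx ∈ W, fh w xx = 0 := by
      intro xx hxx
      have hrep := basW.sum_repr ⟨xx, hxx⟩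
      have h13 : fh w ((⟨xx, hxx⟩ : W) : F) = 0 := by
        rw [← hrep, Submodule.coe_sum, map_sum]
        refine Finset.sum_eq_zero fun k _ => ?_
        have h11 : (((basW.repr ⟨xx, hxx⟩ k • basW k : W)) : F)
            = basW.repr ⟨xx, hxx⟩ k • (basW k : F) := rfl
        rw [h11, map_smul, hfbas k, smul_zero]
      exact h13
    -- the codeword enc w vanishes on Z0
    have hencZ0 : ∀ pos ∈ Z0, ∀ cα, enc w (pos, cα) = 0 := by
      rintro ⟨b, j⟩ hpos cα
      rw [hEnc]
      exact hfW _ (hηW b j hpos cα)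
    have hZwlt := key w hw0
    set Zw := Finset.univ.filter
      (fun pos : Fin t × Fin nL => ∀ cα, enc w (pos, cα) = 0) with hZw
    have hsub : Z0 ⊆ Zw := by
      intro pos hpos
      rw [hZw, Finset.mem_filter]
      exact ⟨Finset.mem_univ _, hencZ0 pos hpos⟩
    have hZwcard : Zw.card = s0 := by
      have h12 := Finset.card_le_card hsub
      omega
    refine ⟨w, 0, hw0, ?_⟩
    rw [hdist_eq w 0]
    have hfilter : (Finset.univ.filter fun pos : Fin t × Fin nL =>
        ∀ cα, enc (w - 0) (pos, cα) = 0) = Zw := by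
      refine Finset.filter_congr fun pos _ => ?_
      simp only [sub_zero]
    rw [hfilter, hZwcard]
    omega
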